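/- Let V be a finite-dimensional real vector space with V = U ⊕ W where dim U = dim W ≥ 2, and let F ∈ Λ²V* satisfy F ∈ U* ∧ W* (i.e. F vanishes on U×U and W×W). Then there exists a nondegenerate symmetric bilinear form g on V of neutral signature such that U and W are totally isotropic for g and the induced scalar product on Λ²V* satisfies g(F,F) = 0. -/

import Mathlib

open Module LinearMap Matrix


lemma traceSum {E : Type*} [AddCommGroup E] [Module ℝ E] [FiniteDimensional ℝ E]
    {ι : Type*} [Fintype ι] [DecidableEq ι] (b : Basis ι ℝ E) (S : E →ₗ[ℝ] E) :
    LinearMap.trace ℝ E (S ∘ₗ S) =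
      ∑ i, ∑ j, b.repr (S (b i)) j * b.repr (S (b j)) i := by
  rw [LinearMap.trace_eq_matrix_trace ℝ b, LinearMap.toMatrix_comp b b b]
  rw [Matrix.trace]
  simp only [Matrix.diag_apply, Matrix.mul_apply, LinearMap.toMatrix_apply]
  rw [Finset.sum_comm]


-- explicit invertible real matrix with trace of square zero, size n ≥ 2
lemma exists_unit_matrix_trace_sq_zero (n : ℕ) (hn : 2 ≤ n) :
    ∃ X Y : Matrix (Fin n) (Fin n) ℝ, X * Y = 1 ∧ Y * X = 1 ∧ (X * X).trace = 0 := by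
  have h0 : (0:ℕ) < n := by omega
  have h1 : (1:ℕ) < n := by omega
  set i0 : Fin n := ⟨0, h0⟩
  set i1 : Fin n := ⟨1, h1⟩
  have hne : i0 ≠ i1 := by simp [i0, i1, Fin.ext_iff]
  have hne' : i1 ≠ i0 := hne.symm
  set b : ℝ := Real.sqrt (n / 2) with hb
  have hb2 : b * b = n / 2 := Real.mul_self_sqrt (by positivity)
  set J : Matrix (Fin n) (Fin n) ℝ := Matrix.single i0 i1 1 - Matrix.single i1 i0 1 with hJ
  set K : Matrix (Fin n) (Fin n) ℝ := Matrix.single i0 i0 1 + Matrix.single i1 i1 1 with hK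
  have hJJ : J * J = -K := by
    simp only [hJ, hK, sub_mul, mul_sub]
    simp [hne, hne']
    abel
  have hJK : J * K = J := by
    simp only [hJ, hK, sub_mul, mul_add]
    simp [hne, hne']
    abel
  have hKJ : K * J = J := by
    simp only [hJ, hK, add_mul, mul_sub]
    simp [hne, hne']
  have h1b : (1:ℝ) + b * b ≠ 0 := by positivity
  set β : ℝ := b / (1 + b * b) with hβ
  set γ : ℝ := (b * b) / (1 + b * b) with hγ
  refine ⟨1 + b • J, 1 - β • J - γ • K, ?_, ?_, ?_⟩
  · have : (1 + b • J) * (1 - β • J - γ • K)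
        = 1 + (b - β - b * γ) • J + (b * β - γ) • K := by
      simp only [mul_sub, sub_mul, mul_add, add_mul, one_mul, mul_one,
        Matrix.smul_mul, Matrix.mul_smul]
      rw [hJJ, hJK]
      module
    rw [this]
    have e1 : b - β - b * γ = 0 := by rw [hβ, hγ]; field_simp; ring
    have e2 : b * β - γ = 0 := by rw [hβ, hγ]; ring
    rw [e1, e2]; simp
  · have : (1 - β • J - γ • K) * (1 + b • J)
        = 1 + (b - β - b * γ) • J + (b * β - γ) • K := by
      simp only [mul_sub, sub_mul, mul_add, add_mul, one_mul, mul_one,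
        Matrix.smul_mul, Matrix.mul_smul]
      rw [hJJ, hKJ]
      module
    rw [this]
    have e1 : b - β - b * γ = 0 := by rw [hβ, hγ]; field_simp; ring
    have e2 : b * β - γ = 0 := by rw [hβ, hγ]; ring
    rw [e1, e2]; simp
  · have : (1 + b • J) * (1 + b • J) = 1 + (2 * b) • J + (b * b) • (-K) := by
      simp only [mul_add, add_mul, one_mul, mul_one, Matrix.smul_mul, Matrix.mul_smul,
        ]
      rw [hJJ]
      module
    rw [this]
    have htJ : J.trace = 0 := by
      simp [hJ, Matrix.trace_sub, Matrix.trace_single_eq_of_ne _ _ (1:ℝ) hne',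
        Matrix.trace_single_eq_of_ne _ _ (1:ℝ) hne]
    have htK : K.trace = 2 := by
      simp [hK, Matrix.trace_single_eq_same]
      norm_num
    simp [Matrix.trace_add, Matrix.trace_smul, htJ, htK, hb2]

-- KEY singular case
lemma key_singular {E : Type*} [AddCommGroup E] [Module ℝ E] [FiniteDimensional ℝ E]
    (T : E →ₗ[ℝ] E) (hT : LinearMap.ker T ≠ ⊥) :
    ∃ e : E ≃ₗ[ℝ] E,
      LinearMap.trace ℝ E ((T ∘ₗ (e : E →ₗ[ℝ] E)) ∘ₗ (T ∘ₗ (e : E →ₗ[ℝ] E))) = 0 := by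
  classical
  set K := LinearMap.ker T with hKdef
  obtain ⟨C, hC⟩ := Submodule.exists_isCompl K
  set k := finrank ℝ K with hk
  set r := finrank ℝ C with hr
  have hk1 : 1 ≤ k := by
    by_contra h
    exact hT (Submodule.finrank_eq_zero.mp (by omega))
  -- the restriction of T to C, as an equiv onto range T
  have hmem : ∀ c : C, T c ∈ LinearMap.range T := fun c => ⟨c, rfl⟩
  set m : C →ₗ[ℝ] LinearMap.range T := T.restrict (fun x _ => ⟨x, rfl⟩) with hm
  have hminj : Function.Injective m := by
    rw [← LinearMap.ker_eq_bot]
    rw [LinearMap.ker_eq_bot']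
    intro c hc
    have h1 : T (c : E) = 0 := by
      have := congrArg (Subtype.val) hc
      exact this
    have h2 : (c : E) ∈ K ⊓ C := ⟨h1, c.2⟩
    rw [hC.inf_eq_bot] at h2
    exact Subtype.ext h2
  have hmsurj : Function.Surjective m := by
    rintro ⟨y, x, rfl⟩
    obtain ⟨u, v, hu, hv, huv⟩ := Submodule.codisjoint_iff_exists_add_eq.mp hC.codisjoint x
    refine ⟨⟨v, hv⟩, ?_⟩
    apply Subtype.ext
    simp only [hm, LinearMap.restrict_apply]
    have : T u = 0 := hu
    rw [← huv]
    simp [map_add, this]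
    rfl
  set e₁ : C ≃ₗ[ℝ] LinearMap.range T := LinearEquiv.ofBijective m ⟨hminj, hmsurj⟩
  -- complement of range T
  obtain ⟨D, hD⟩ := Submodule.exists_isCompl (LinearMap.range T)
  have hrankR : finrank ℝ (LinearMap.range T) = r := (LinearEquiv.finrank_eq e₁).symm
  have hsum1 : k + r = finrank ℝ E := by
    rw [hk, hr]
    exact Submodule.finrank_add_eq_of_isCompl hC
  have hsum2 : finrank ℝ (LinearMap.range T) + finrank ℝ D = finrank ℝ E :=
    Submodule.finrank_add_eq_of_isCompl hD
  have hrankD : finrank ℝ D = k := by omega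
  -- bases
  set bK : Basis (Fin k) ℝ K := finBasis ℝ K
  set bC : Basis (Fin r) ℝ C := finBasis ℝ C
  set bD : Basis (Fin k) ℝ D := (finBasis ℝ D).reindex (finCongr hrankD)
  set bR : Basis (Fin r) ℝ (LinearMap.range T) := bC.map e₁
  set eAll : Basis (Fin k ⊕ Fin r) ℝ E :=
    (bK.prod bC).map (Submodule.prodEquivOfIsCompl K C hC)
  set βAll : Basis (Fin r ⊕ Fin k) ℝ E :=
    (bR.prod bD).map (Submodule.prodEquivOfIsCompl (LinearMap.range T) D hD)
  set σ : (Fin r ⊕ Fin k) ≃ (Fin k ⊕ Fin r) :=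
    finSumFinEquiv.trans ((finCongr (add_comm r k)).trans finSumFinEquiv.symm) with hσ
  set q : E ≃ₗ[ℝ] E := βAll.equiv eAll σ with hq
  -- basic facts
  have heAll_l : ∀ i : Fin k, eAll (Sum.inl i) = (bK i : E) := by
    intro i
    simp [eAll, Basis.prod_apply, Submodule.coe_prodEquivOfIsCompl]
  have heAll_r : ∀ j : Fin r, eAll (Sum.inr j) = (bC j : E) := by
    intro j
    simp [eAll, Basis.prod_apply, Submodule.coe_prodEquivOfIsCompl]
  have hβAll_l : ∀ j : Fin r, βAll (Sum.inl j) = (bR j : E) := by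
    intro j
    simp [βAll, Basis.prod_apply, Submodule.coe_prodEquivOfIsCompl]
  have hTC : ∀ j : Fin r, T (bC j : E) = (bR j : E) := by
    intro j
    simp [bR, Basis.map_apply, e₁, LinearEquiv.ofBijective_apply, hm,
      LinearMap.coe_restrict_apply]
    rfl
  -- behaviour of S := q ∘ T on the basis eAll
  set S : E →ₗ[ℝ] E := (q : E →ₗ[ℝ] E) ∘ₗ T with hS
  have hSl : ∀ i : Fin k, S (eAll (Sum.inl i)) = 0 := by
    intro i
    rw [heAll_l]
    have : T (bK i : E) = 0 := (bK i).2
    simp [hS, this]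
  have hSr : ∀ j : Fin r, S (eAll (Sum.inr j)) = eAll (σ (Sum.inl j)) := by
    intro j
    rw [heAll_r]
    simp only [hS, LinearMap.coe_comp, Function.comp_apply, hTC]
    rw [← hβAll_l, hq]
    exact βAll.equiv_apply _ _ σ
  -- σ arithmetic
  have hσval : ∀ (j : Fin r) (j' : Fin r), σ (Sum.inl j) = Sum.inr j' → (j : ℕ) = k + j' := by
    intro j j' h
    have := congrArg (fun t => ((finSumFinEquiv t : Fin (k + r)) : ℕ)) h
    simpa [hσ] using this
  have hrepr : ∀ (a y : Fin k ⊕ Fin r), eAll.repr (eAll a) y = if a = y then 1 else 0 := by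
    intro a y
    rw [eAll.repr_self]
    exact Finsupp.single_apply
  refine ⟨q, ?_⟩
  have hassoc : (T ∘ₗ (q : E →ₗ[ℝ] E)) ∘ₗ (T ∘ₗ (q : E →ₗ[ℝ] E))
      = T ∘ₗ (((q : E →ₗ[ℝ] E) ∘ₗ T) ∘ₗ (q : E →ₗ[ℝ] E)) := by
    simp [LinearMap.comp_assoc]
  rw [hassoc, LinearMap.trace_comp_comm', ← hS]
  have hSS : ((S ∘ₗ (q : E →ₗ[ℝ] E)) ∘ₗ T) = S ∘ₗ S := by
    simp [hS, LinearMap.comp_assoc]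
  rw [hSS, traceSum eAll S]
  apply Finset.sum_eq_zero
  intro x _
  rcases x with i | j
  · apply Finset.sum_eq_zero
    intro y _
    rw [hSl i]
    simp
  · apply Finset.sum_eq_zero
    intro y _
    rw [hSr j]
    rcases hc1 : σ (Sum.inl j) with i1 | j1
    · by_cases hy : (Sum.inl i1 : Fin k ⊕ Fin r) = y
      · subst hy
        rw [hSl i1]
        simp
      · rw [hrepr, if_neg hy, zero_mul]
    · by_cases hy : (Sum.inr j1 : Fin k ⊕ Fin r) = y
      · subst hy
        rw [hSr j1]
        rcases hc2 : σ (Sum.inl j1) with i2 | j2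
        · rw [hrepr (Sum.inl i2) (Sum.inr j), if_neg (by simp), mul_zero]
        · have h1 : (j : ℕ) = k + j1 := hσval j j1 hc1
          have h2 : (j1 : ℕ) = k + j2 := hσval j1 j2 hc2
          have hne : (Sum.inr j2 : Fin k ⊕ Fin r) ≠ Sum.inr j := by
            simp only [ne_eq, Sum.inr.injEq]
            intro hh
            rw [hh] at h2
            omega
          rw [hrepr (Sum.inr j2) (Sum.inr j), if_neg hne, mul_zero]
      · rw [hrepr, if_neg hy, zero_mul]

lemma key_lemma {E : Type*} [AddCommGroup E] [Module ℝ E] [FiniteDimensional ℝ E]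
    (h2 : 2 ≤ finrank ℝ E) (T : E →ₗ[ℝ] E) :
    ∃ e : E ≃ₗ[ℝ] E,
      LinearMap.trace ℝ E ((T ∘ₗ (e : E →ₗ[ℝ] E)) ∘ₗ (T ∘ₗ (e : E →ₗ[ℝ] E))) = 0 := by
  classical
  by_cases hker : LinearMap.ker T = ⊥
  · have hinj : Function.Injective T := LinearMap.ker_eq_bot.mp hker
    have hsurj : Function.Surjective T := (LinearMap.injective_iff_surjective).mp hinj
    set Te : E ≃ₗ[ℝ] E := LinearEquiv.ofBijective T ⟨hinj, hsurj⟩ with hTe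
    set eB : Basis (Fin (finrank ℝ E)) ℝ E := finBasis ℝ E
    obtain ⟨X, Y, hXY, hYX, htr⟩ := exists_unit_matrix_trace_sq_zero _ h2
    set xe : E ≃ₗ[ℝ] E := LinearEquiv.ofLinear (toLin eB eB X) (toLin eB eB Y)
      (by rw [← Matrix.toLin_mul, hXY, Matrix.toLin_one])
      (by rw [← Matrix.toLin_mul, hYX, Matrix.toLin_one]) with hxe
    refine ⟨xe.trans Te.symm, ?_⟩
    have hTcomp : T ∘ₗ ((xe.trans Te.symm : E ≃ₗ[ℝ] E) : E →ₗ[ℝ] E) = toLin eB eB X := by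
      ext v
      simp only [LinearMap.coe_comp, Function.comp_apply, LinearEquiv.coe_coe,
        LinearEquiv.trans_apply]
      have h1 : T (Te.symm (xe v)) = Te (Te.symm (xe v)) := rfl
      rw [h1, LinearEquiv.apply_symm_apply]
      simp [hxe]
    rw [hTcomp, ← Matrix.toLin_mul, LinearMap.trace_eq_matrix_trace ℝ eB,
      LinearMap.toMatrix_toLin]
    exact htr
  · exact key_singular T hker

/-- If `V = U ⊕ W` with `dim U = dim W ≥ 2` and `F` is a 2-form lying in
`U* ∧ W*`, then there is a nondegenerate symmetric bilinear form `g` on `V` of neutral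
signature for which `U` and `W` are totally isotropic and `g(F,F) = Tr((F^♯)²) = 0`. -/
theorem stmt_0 (V : Type*) [AddCommGroup V] [Module ℝ V] [FiniteDimensional ℝ V]
    (U W : Submodule ℝ V) (hcompl : IsCompl U W)
    (hdim : Module.finrank ℝ U = Module.finrank ℝ W) (h2 : 2 ≤ Module.finrank ℝ U)
    (F : V →ₗ[ℝ] V →ₗ[ℝ] ℝ) (halt : ∀ v, F v v = 0)
    (hFU : ∀ u ∈ U, ∀ u' ∈ U, F u u' = 0) (hFW : ∀ w ∈ W, ∀ w' ∈ W, F w w' = 0) :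
    ∃ g : V →ₗ[ℝ] V →ₗ[ℝ] ℝ,
      -- symmetric
      (∀ x y, g x y = g y x) ∧
      -- nondegenerate
      (∀ x, (∀ y, g x y = 0) → x = 0) ∧
      -- neutral signature: an orthogonal basis with as many `+1`'s as `-1`'s
      (∃ p : ℕ, ∃ b : Basis (Fin (2 * p)) ℝ V,
        ∀ i j, g (b i) (b j) = if j = i then (if (i : ℕ) < p then 1 else -1) else 0) ∧
      -- U and W totally isotropic
      (∀ u ∈ U, ∀ u' ∈ U, g u u' = 0) ∧ (∀ w ∈ W, ∀ w' ∈ W, g w w' = 0) ∧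
      -- g(F,F) = Tr((F^♯)²) = 0, where F^♯ is characterized by g(F^♯ v, v') = F(v, v')
      (∀ φ : V →ₗ[ℝ] V, (∀ v v', g (φ v) v' = F v v') →
        LinearMap.trace ℝ V (φ ∘ₗ φ) = 0) := by
  classical
  have hanti : ∀ v v', F v' v = -F v v' := by
    intro v v'
    have h := halt (v + v')
    simp only [map_add, LinearMap.add_apply, halt] at h
    linarith
  set n := finrank ℝ U with hn
  set bU : Basis (Fin n) ℝ U := finBasis ℝ U with hbU
  set bW : Basis (Fin n) ℝ W := (finBasis ℝ W).reindex (finCongr hdim.symm) with hbW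
  -- the endomorphism of U encoding F in these bases
  set T : U →ₗ[ℝ] U :=
    ∑ j : Fin n, LinearMap.smulRight ((F.flip (bW j : V)).comp U.subtype) (bU j) with hT
  have hTrepr : ∀ (u : U) (j : Fin n), bU.repr (T u) j = F (u : V) (bW j : V) := by
    intro u j
    simp only [hT, LinearMap.sum_apply, LinearMap.smulRight_apply, LinearMap.coe_comp,
      Function.comp_apply, LinearMap.flip_apply, Submodule.coe_subtype, map_sum,
      _root_.map_smul, Basis.repr_self]
    rw [Finset.sum_apply']
    simp [Finsupp.single_apply]
  obtain ⟨e, htr⟩ := key_lemma h2 T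
  -- the adapted basis of V
  set c : Basis (Fin n ⊕ Fin n) ℝ V :=
    ((bU.map e).prod bW).map (Submodule.prodEquivOfIsCompl U W hcompl) with hc
  have hcl : ∀ i, c (Sum.inl i) = ((e (bU i) : U) : V) := by
    intro i
    simp [hc, Basis.prod_apply, Submodule.coe_prodEquivOfIsCompl, Basis.map_apply]
  have hcr : ∀ j, c (Sum.inr j) = ((bW j : W) : V) := by
    intro j
    simp [hc, Basis.prod_apply, Submodule.coe_prodEquivOfIsCompl, Basis.map_apply]
  -- the metric
  set g : V →ₗ[ℝ] V →ₗ[ℝ] ℝ :=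
    ∑ x : Fin n ⊕ Fin n, LinearMap.smulRight (c.coord x) (c.coord (Sum.swap x)) with hg
  have hgapply : ∀ v v', g v v' = ∑ x, c.repr v x * c.repr v' (Sum.swap x) := by
    intro v v'
    simp [hg, LinearMap.sum_apply, LinearMap.smulRight_apply, Basis.coord_apply,
      smul_eq_mul]
  have hswapinj : Function.Injective (Sum.swap : Fin n ⊕ Fin n → Fin n ⊕ Fin n) :=
    Function.Involutive.injective Sum.swap_swap
  have hgc : ∀ x y, g (c x) (c y) = if y = Sum.swap x then 1 else 0 := by
    intro x y
    rw [hgapply]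
    simp only [Basis.repr_self, Finsupp.single_apply]
    simp only [ite_mul, one_mul, zero_mul]
    rw [Finset.sum_ite_eq]
    simp
  -- the key trace fact in basis form
  have hBtr : ∑ i : Fin n, ∑ j : Fin n,
      F (c (Sum.inl i)) (c (Sum.inr j)) * F (c (Sum.inl j)) (c (Sum.inr i)) = 0 := by
    rw [traceSum bU (T ∘ₗ (e : U →ₗ[ℝ] U))] at htr
    have heq : ∀ i j : Fin n, bU.repr ((T ∘ₗ (e : U →ₗ[ℝ] U)) (bU i)) j
        = F (c (Sum.inl i)) (c (Sum.inr j)) := by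
      intro i j
      rw [hcl, hcr]
      simp [hTrepr]
    simp only [heq] at htr
    exact htr
  -- symmetry
  have hsym : ∀ x y, g x y = g y x := by
    intro x y
    rw [hgapply, hgapply]
    rw [← Equiv.sum_comp (Equiv.sumComm (Fin n) (Fin n))
      (fun z => c.repr x z * c.repr y (Sum.swap z))]
    apply Finset.sum_congr rfl
    intro z _
    simp only [Equiv.sumComm_apply, Sum.swap_swap]
    ring
  -- nondegeneracy
  have hnondeg : ∀ x, (∀ y, g x y = 0) → x = 0 := by
    intro x hx
    have hco : ∀ z, c.repr x z = 0 := by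
      intro z
      have h := hx (c (Sum.swap z))
      rw [hgapply] at h
      simp only [Basis.repr_self, Finsupp.single_apply] at h
      have hcollapse : ∀ x' : Fin n ⊕ Fin n,
          c.repr x x' * (if Sum.swap z = Sum.swap x' then (1:ℝ) else 0)
            = if z = x' then c.repr x x' else 0 := by
        intro x'
        by_cases hzx : z = x'
        · subst hzx; simp
        · rw [if_neg (fun hh => hzx (hswapinj hh)), if_neg hzx, mul_zero]
      rw [Finset.sum_congr rfl (fun x' _ => hcollapse x')] at h
      rw [Finset.sum_ite_eq] at h
      simpa using h
    have : c.repr x = 0 := Finsupp.ext hco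
    exact (LinearEquiv.map_eq_zero_iff c.repr).mp this
  -- isotropy of U
  have hisoU : ∀ u ∈ U, ∀ u' ∈ U, g u u' = 0 := by
    intro u hu u' hu'
    have hrep : ∀ (p : U), (p : V) = ∑ i, ((bU.map e).repr p) i • c (Sum.inl i) := by
      intro p
      conv_lhs => rw [← Basis.sum_repr (bU.map e) p]
      push_cast
      apply Finset.sum_congr rfl
      intro i _
      rw [hcl, Basis.map_apply]
    have h1 : u = ((⟨u, hu⟩ : U) : V) := rfl
    have h2 : u' = ((⟨u', hu'⟩ : U) : V) := rfl
    rw [h1, h2, hrep, hrep]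
    simp only [map_sum, _root_.map_smul, LinearMap.coe_sum, Finset.sum_apply,
      LinearMap.smul_apply, smul_eq_mul, hgc]
    apply Finset.sum_eq_zero
    intro i _
    simp
  -- isotropy of W
  have hisoW : ∀ w ∈ W, ∀ w' ∈ W, g w w' = 0 := by
    intro w hw w' hw'
    have hrep : ∀ (p : W), (p : V) = ∑ i, (bW.repr p) i • c (Sum.inr i) := by
      intro p
      conv_lhs => rw [← Basis.sum_repr bW p]
      push_cast
      apply Finset.sum_congr rfl
      intro i _
      rw [hcr]
    have h1 : w = ((⟨w, hw⟩ : W) : V) := rfl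
    have h2 : w' = ((⟨w', hw'⟩ : W) : V) := rfl
    rw [h1, h2, hrep, hrep]
    simp only [map_sum, _root_.map_smul, LinearMap.coe_sum, Finset.sum_apply,
      LinearMap.smul_apply, smul_eq_mul, hgc]
    apply Finset.sum_eq_zero
    intro i _
    simp
  -- neutral basis
  set s : ℝ := (Real.sqrt 2)⁻¹ with hsdef
  have hs : s * s = 2⁻¹ := by
    rw [hsdef, ← mul_inv]
    rw [Real.mul_self_sqrt (by norm_num : (0:ℝ) ≤ 2)]
  set v : (Fin n ⊕ Fin n) → V := Sum.elim
      (fun i => s • (c (Sum.inl i) + c (Sum.inr i)))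
      (fun i => s • (c (Sum.inl i) - c (Sum.inr i))) with hv
  set f : V →ₗ[ℝ] V := c.constr ℝ v with hf
  have hfc : ∀ x, f (c x) = v x := fun x => c.constr_basis ℝ v x
  have hff : f ∘ₗ f = LinearMap.id := by
    apply c.ext
    intro x
    have expand : ∀ z : Fin n ⊕ Fin n, f (f (c z)) = c z := by
      intro z
      rcases z with i | i
      · rw [hfc, hv]
        simp only [Sum.elim_inl, _root_.map_smul, map_add]
        rw [hfc, hfc, hv]
        simp only [Sum.elim_inl, Sum.elim_inr, smul_add, smul_sub, smul_smul, hs]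
        module
      · rw [hfc, hv]
        simp only [Sum.elim_inr, _root_.map_smul, map_sub]
        rw [hfc, hfc, hv]
        simp only [Sum.elim_inl, Sum.elim_inr, smul_add, smul_sub, smul_smul, hs]
        module
    simpa using expand x
  set Einv : V ≃ₗ[ℝ] V := LinearEquiv.ofLinear f f hff hff with hEinv
  set d0 : Basis (Fin n ⊕ Fin n) ℝ V := c.map Einv with hd0
  have hd0c : ∀ x, d0 x = v x := by
    intro x
    rw [hd0, Basis.map_apply]
    exact hfc x
  set ρ : (Fin n ⊕ Fin n) ≃ Fin (2 * n) :=
    finSumFinEquiv.trans (finCongr (two_mul n).symm) with hρ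
  set d : Basis (Fin (2 * n)) ℝ V := d0.reindex ρ with hd
  have hρl : ∀ i : Fin n, ((ρ (Sum.inl i) : Fin (2*n)) : ℕ) = (i : ℕ) := by
    intro i; simp [hρ]
  have hρr : ∀ i : Fin n, ((ρ (Sum.inr i) : Fin (2*n)) : ℕ) = n + (i : ℕ) := by
    intro i; simp [hρ]; omega
  have hmain : ∀ x y : Fin n ⊕ Fin n, g (d0 x) (d0 y)
      = if y = x then (if ((ρ x : Fin (2*n)) : ℕ) < n then (1:ℝ) else -1) else 0 := by
    intro x y
    rcases x with i | i <;> rcases y with j | j <;>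
      rw [hd0c, hd0c] <;>
      simp only [hv, Sum.elim_inl, Sum.elim_inr] <;>
      simp only [map_add, map_sub, _root_.map_smul, LinearMap.add_apply,
        LinearMap.sub_apply, LinearMap.smul_apply, smul_eq_mul, hgc] <;>
      simp only [Sum.swap_inl, Sum.swap_inr, Sum.inl.injEq, Sum.inr.injEq,
        reduceCtorEq, if_false, Sum.inr.injEq] <;>
      by_cases hij : j = i
    · subst hij
      have hlt : ((ρ (Sum.inl j) : Fin (2*n)) : ℕ) < n := by rw [hρl]; exact j.isLt
      rw [if_pos rfl, if_pos hlt]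
      norm_num
      linear_combination (2:ℝ) * hs
    · simp [hij]
    · subst hij
      simp only [if_pos rfl]
      ring
    · simp [hij]
    · subst hij
      simp only [if_pos rfl]
      ring
    · simp [hij]
    · subst hij
      have hlt : ¬ (((ρ (Sum.inr j) : Fin (2*n)) : ℕ) < n) := by rw [hρr]; omega
      rw [if_pos rfl, if_neg hlt]
      norm_num
      linear_combination (-2:ℝ) * hs
    · simp [hij]
  -- membership facts
  have hmemU : ∀ i, c (Sum.inl i) ∈ U := fun i => by rw [hcl]; exact (e (bU i)).2
  have hmemW : ∀ i, c (Sum.inr i) ∈ W := fun i => by rw [hcr]; exact (bW i).2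
  have hUU : ∀ i j, F (c (Sum.inl i)) (c (Sum.inl j)) = 0 :=
    fun i j => hFU _ (hmemU i) _ (hmemU j)
  have hWW : ∀ i j, F (c (Sum.inr i)) (c (Sum.inr j)) = 0 :=
    fun i j => hFW _ (hmemW i) _ (hmemW j)
  -- the trace condition
  have htrace : ∀ φ : V →ₗ[ℝ] V, (∀ v v', g (φ v) v' = F v v') →
      LinearMap.trace ℝ V (φ ∘ₗ φ) = 0 := by
    intro φ hφ
    have hreprφ : ∀ (w : V) (x), c.repr (φ w) x = F w (c (Sum.swap x)) := by
      intro w x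
      have h := hφ w (c (Sum.swap x))
      rw [hgapply] at h
      simp only [Basis.repr_self, Finsupp.single_apply] at h
      have hcollapse : ∀ z, c.repr (φ w) z *
          (if Sum.swap x = Sum.swap z then (1:ℝ) else 0)
            = if x = z then c.repr (φ w) z else 0 := by
        intro z
        by_cases hxz : x = z
        · subst hxz; simp
        · rw [if_neg (fun hh => hxz (hswapinj hh)), if_neg hxz, mul_zero]
      rw [Finset.sum_congr rfl (fun z _ => hcollapse z), Finset.sum_ite_eq] at h
      simpa using h
    rw [traceSum c φ]
    have hsubst : ∀ x z : Fin n ⊕ Fin n, c.repr (φ (c x)) z * c.repr (φ (c z)) x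
        = F (c x) (c (Sum.swap z)) * F (c z) (c (Sum.swap x)) := by
      intro x z; rw [hreprφ, hreprφ]
    rw [Finset.sum_congr rfl (fun x _ => Finset.sum_congr rfl (fun z _ => hsubst x z))]
    simp only [Fintype.sum_sum_type, Sum.swap_inl, Sum.swap_inr]
    simp only [hUU, hWW, zero_mul, mul_zero, Finset.sum_const_zero, add_zero, zero_add]
    have hWU : ∀ i j, F (c (Sum.inr i)) (c (Sum.inl j))
        = - F (c (Sum.inl j)) (c (Sum.inr i)) := fun i j => hanti _ _
    simp only [hWU, neg_mul_neg]
    have hswap2 : (∑ i : Fin n, ∑ j : Fin n,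
        F (c (Sum.inl j)) (c (Sum.inr i)) * F (c (Sum.inl i)) (c (Sum.inr j)))
        = ∑ i : Fin n, ∑ j : Fin n,
        F (c (Sum.inl i)) (c (Sum.inr j)) * F (c (Sum.inl j)) (c (Sum.inr i)) :=
      Finset.sum_comm
    rw [hswap2, hBtr]
    norm_num
  refine ⟨g, hsym, hnondeg, ⟨n, d, ?_⟩, hisoU, hisoW, htrace⟩
  intro i j
  rw [hd, Basis.reindex_apply, Basis.reindex_apply, hmain]
  simp only [Equiv.apply_symm_apply, EmbeddingLike.apply_eq_iff_eq]
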